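/- For every real number k > 1/2, the (absolutely convergent) double integral over the region {(t₁, t₂) ∈ ℝ² : 0 < t₁ < t₂} satisfies ∫∫_{0<t₁<t₂} (t₁·t₂)^{k−3/2} · (t₁ − t₂) · e^{−(t₁+t₂)} dt₁ dt₂ = −(1/√π) · Γ(k) · Γ(k − 1/2). -/

import Mathlib

open MeasureTheory Set Real

noncomputable def wB (x : ℝ × ℝ) : ℝ × ℝ →L[ℝ] ℝ × ℝ :=
  LinearMap.toContinuousLinearMap (Matrix.toLin (Module.Basis.finTwoProd ℝ) (Module.Basis.finTwoProd ℝ)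
    !![x.2, x.1; 0, 1])

def wPhi (x : ℝ × ℝ) : ℝ × ℝ := (x.2 * x.1, x.2)

lemma wB_det (x : ℝ × ℝ) : (wB x).det = x.2 := by
  simp [wB, LinearMap.det_toContinuousLinearMap, LinearMap.det_toLin, Matrix.det_fin_two_of]

lemma hasFDerivAt_wPhi (x : ℝ × ℝ) : HasFDerivAt wPhi (wB x) x := by
  rw [wB, Matrix.toLin_finTwoProd_toContinuousLinearMap]
  refine (HasFDerivAt.prodMk (𝕜 := ℝ) ((hasFDerivAt_snd (𝕜 := ℝ) (p := x)).fun_mul (hasFDerivAt_fst (𝕜 := ℝ) (p := x))) (hasFDerivAt_snd (𝕜 := ℝ) (p := x))).congr_fderiv ?_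
  simp

lemma wPhi_image : wPhi '' ((Ioo (0:ℝ) 1) ×ˢ (Ioi (0:ℝ))) = {p : ℝ × ℝ | 0 < p.1 ∧ p.1 < p.2} := by
  ext p
  constructor
  · rintro ⟨⟨y, t⟩, ⟨⟨hy0, hy1⟩, ht⟩, rfl⟩
    simp only [wPhi, mem_setOf_eq]
    constructor
    · exact mul_pos ht hy0
    · nlinarith [mem_Ioi.mp ht]
  · rintro ⟨h1, h2⟩
    refine ⟨(p.1 / p.2, p.2), ⟨⟨?_, ?_⟩, ?_⟩, ?_⟩
    · exact div_pos h1 (lt_trans h1 h2)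
    · exact (div_lt_one (lt_trans h1 h2)).mpr h2
    · exact lt_trans h1 h2
    · have hp2 : p.2 ≠ 0 := ne_of_gt (lt_trans h1 h2)
      simp only [wPhi]
      rw [mul_div_cancel₀ _ hp2]

lemma wPhi_injOn : InjOn wPhi ((Ioo (0:ℝ) 1) ×ˢ (Ioi (0:ℝ))) := by
  rintro ⟨y, t⟩ ⟨⟨_, _⟩, ht⟩ ⟨y', t'⟩ ⟨⟨_, _⟩, _⟩ h
  have h2 : t = t' := congrArg Prod.snd h
  have h1 : t * y = t' * y' := congrArg Prod.fst h
  subst h2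
  have : y = y' := by
    have := mem_Ioi.mp ht
    field_simp at h1
    linarith
  simp [this]

lemma wBase (k r : ℝ) (hk : 1/2 < k) (hr : 0 < r) :
    IntegrableOn (fun t : ℝ => t ^ (2*k - 1) * Real.exp (-(r * t))) (Ioi (0:ℝ)) := by
  have h := integrableOn_rpow_mul_exp_neg_mul_rpow (p := 1) (s := 2*k - 1) (b := r)
    (by linarith) one_pos hr
  simp only [Real.rpow_one] at h
  refine h.congr_fun (fun t ht => ?_) measurableSet_Ioi
  simp only [neg_mul]

lemma wInner (k y : ℝ) (hk : 1/2 < k) (hy : 0 < y) :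
    (∫ t in Ioi (0:ℝ), y ^ (k - 3/2) * (y - 1) * (t ^ (2*k - 1) * Real.exp (-((1 + y) * t)))) =
    y ^ (k - 3/2) * (y - 1) * ((1 / (1 + y)) ^ (2*k) * Real.Gamma (2*k)) := by
  rw [integral_const_mul]
  congr 1
  have := Real.integral_rpow_mul_exp_neg_mul_Ioi (a := 2*k) (r := 1 + y) (by linarith) (by linarith)
  simpa using this

lemma wPoint (k y t : ℝ) (hy0 : 0 < y) (ht : 0 < t) :
    |t| * ((t * y * t) ^ (k - 3/2) * (t * y - t) * Real.exp (-(t * y + t))) =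
    y ^ (k - 3/2) * (y - 1) * (t ^ (2*k - 1) * Real.exp (-((1 + y) * t))) := by
  rw [abs_of_pos ht]
  have h2 : t * y * t = t ^ (2:ℝ) * y := by rw [Real.rpow_two]; ring
  have h3 : (t * y * t) ^ (k - 3/2) = t ^ (2 * (k - 3/2)) * y ^ (k - 3/2) := by
    rw [h2, Real.mul_rpow (by positivity) hy0.le, ← Real.rpow_mul ht.le]
  have h4 : t ^ (2*k - 1) = t ^ (2 * (k - 3/2)) * (t * t) := by
    rw [show t * t = t ^ (2:ℝ) by rw [Real.rpow_two]; ring, ← Real.rpow_add ht]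
    congr 1; ring
  have h5 : Real.exp (-(t * y + t)) = Real.exp (-((1 + y) * t)) := by ring_nf
  rw [h3, h4, h5]
  ring

lemma wJ (k : ℝ) (hk : 1/2 < k) :
    ∫ y in (0:ℝ)..1, y ^ (k - 3/2) * ((y - 1) * (1 + y) ^ (-(2*k))) =
    -(k - 1/2)⁻¹ * 2 ^ (1 - 2*k) := by
  have hc : (0:ℝ) < k - 1/2 := by linarith
  set F : ℝ → ℝ := fun y => -(k - 1/2)⁻¹ * (y ^ (k - 1/2) * (1 + y) ^ (1 - 2*k)) with hF
  have hcont : ContinuousOn F (Icc 0 1) := by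
    apply ContinuousOn.mul continuousOn_const
    apply ContinuousOn.mul
    · exact fun y hy =>
        (Real.continuousAt_rpow_const y _ (Or.inr (by linarith))).continuousWithinAt
    · exact ((continuous_const.add continuous_id').continuousOn).rpow_const
        (fun y hy => Or.inl (ne_of_gt (by show (0:ℝ) < 1 + y; linarith [hy.1])))
  have hderiv : ∀ y ∈ Ioo (0:ℝ) 1,
      HasDerivWithinAt F (y ^ (k - 3/2) * ((y - 1) * (1 + y) ^ (-(2*k)))) (Ioi y) y := by
    intro y hy
    have hy0 : 0 < y := hy.1
    have h1y : (0:ℝ) < 1 + y := by linarith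
    have d1 : HasDerivAt (fun y : ℝ => y ^ (k - 1/2)) ((k - 1/2) * y ^ (k - 1/2 - 1)) y :=
      Real.hasDerivAt_rpow_const (Or.inl hy0.ne')
    have dbase : HasDerivAt (fun y : ℝ => 1 + y) 1 y := by
      simpa using (hasDerivAt_id y).const_add (1:ℝ)
    have d2 : HasDerivAt (fun y : ℝ => (1 + y) ^ (1 - 2*k))
        (1 * (1 - 2*k) * (1 + y) ^ (1 - 2*k - 1)) y := dbase.rpow_const (Or.inl h1y.ne')
    have d3 := ((d1.mul d2).const_mul (-(k - 1/2)⁻¹))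
    refine (HasDerivAt.hasDerivWithinAt ?_)
    refine HasDerivAt.congr_deriv d3 ?_
    symm
    have e1 : y ^ (k - 1/2 - 1) = y ^ (k - 3/2) := by rw [show k - 1/2 - 1 = k - 3/2 by ring]
    have e2 : (1 + y) ^ (1 - 2*k - 1) = (1 + y) ^ (-(2*k)) := by
      rw [show 1 - 2*k - 1 = -(2*k) by ring]
    have e3 : (1 + y) ^ (1 - 2*k) = (1 + y) * (1 + y) ^ (-(2*k)) := by
      rw [show (1 - 2*k) = 1 + (-(2*k)) by ring, Real.rpow_add h1y, Real.rpow_one]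
    have e4 : y ^ (k - 1/2) = y * y ^ (k - 3/2) := by
      rw [show (k - 1/2) = 1 + (k - 3/2) by ring, Real.rpow_add hy0, Real.rpow_one]
    rw [e1, e2, e3, e4]
    generalize y ^ (k - 3/2) = A
    generalize (1 + y) ^ (-(2*k)) = B
    have hinv : (k - 1/2) * (k - 1/2)⁻¹ = 1 := mul_inv_cancel₀ hc.ne'
    linear_combination (-(A * (y - 1) * B)) * hinv
  have hint : IntervalIntegrable (fun y => y ^ (k - 3/2) * ((y - 1) * (1 + y) ^ (-(2*k))))
      volume 0 1 := by
    apply (intervalIntegral.intervalIntegrable_rpow' (by linarith)).mul_continuousOn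
    rw [uIcc_of_le zero_le_one]
    apply ContinuousOn.mul ((continuous_id'.sub continuous_const).continuousOn)
    exact ((continuous_const.add continuous_id').continuousOn).rpow_const
      (fun y hy => Or.inl (ne_of_gt (by show (0:ℝ) < 1 + y; linarith [hy.1])))
  rw [intervalIntegral.integral_eq_sub_of_hasDeriv_right_of_le zero_le_one hcont hderiv hint]
  simp only [hF]
  rw [Real.one_rpow, Real.zero_rpow hc.ne']
  norm_num

/-- For real `k > 1/2`,
`∫∫_{0<t₁<t₂} (t₁t₂)^{k-3/2} (t₁-t₂) e^{-(t₁+t₂)} dt₁ dt₂ = -(1/√π) Γ(k) Γ(k-1/2)`. -/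
theorem weyl_integral_rank_two (k : ℝ) (hk : 1 / 2 < k) :
    ∫ p in {p : ℝ × ℝ | 0 < p.1 ∧ p.1 < p.2},
      (p.1 * p.2) ^ (k - 3 / 2) * (p.1 - p.2) * Real.exp (-(p.1 + p.2)) =
    -(1 / Real.sqrt Real.pi) * Real.Gamma k * Real.Gamma (k - 1 / 2) := by
  have hc : (0:ℝ) < k - 1/2 := by linarith
  have h2k : (0:ℝ) < 2*k := by linarith
  set G : ℝ × ℝ → ℝ := fun x =>
    x.1 ^ (k - 3/2) * (x.1 - 1) * (x.2 ^ (2*k - 1) * Real.exp (-((1 + x.1) * x.2))) with hGdef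
  have hs : MeasurableSet ((Ioo (0:ℝ) 1) ×ˢ (Ioi (0:ℝ))) :=
    measurableSet_Ioo.prod measurableSet_Ioi
  have hGm : Measurable G := by
    simp only [hGdef]
    measurability
  have hGint : Integrable G
      ((volume.restrict (Ioo (0:ℝ) 1)).prod (volume.restrict (Ioi (0:ℝ)))) := by
    rw [integrable_prod_iff hGm.aestronglyMeasurable]
    constructor
    · filter_upwards [ae_restrict_mem measurableSet_Ioo] with y hy
      have hfr : (fun t : ℝ => G (y, t)) = fun t : ℝ =>
          y ^ (k - 3/2) * (y - 1) * (t ^ (2*k - 1) * Real.exp (-((1 + y) * t))) := rfl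
      rw [hfr]
      exact ((wBase k (1 + y) hk (by linarith [hy.1])).const_mul _)
    · have hgmaj : IntegrableOn (fun y : ℝ => y ^ (k - 3/2) * Real.Gamma (2*k)) (Ioo 0 1) := by
        have h := intervalIntegral.intervalIntegrable_rpow'
          (a := 0) (b := 1) (r := k - 3/2) (by linarith)
        rw [intervalIntegrable_iff_integrableOn_Ioo_of_le zero_le_one] at h
        exact h.mul_const _
      apply Integrable.mono hgmaj
        (hGm.norm.aestronglyMeasurable.integral_prod_right')
      filter_upwards [ae_restrict_mem measurableSet_Ioo] with y hy
      have hy0 : 0 < y := hy.1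
      have key : (∫ t in Ioi (0:ℝ), y ^ (k - 3/2) * (t ^ (2*k - 1) * Real.exp (-(1 * t)))) =
          y ^ (k - 3/2) * ((1/(1:ℝ)) ^ (2*k) * Real.Gamma (2*k)) := by
        rw [integral_const_mul]
        congr 1
        have := Real.integral_rpow_mul_exp_neg_mul_Ioi (a := 2*k) (r := 1) h2k one_pos
        simpa using this
      have hb : (∫ t in Ioi (0:ℝ), ‖G (y, t)‖) ≤ y ^ (k - 3/2) * Real.Gamma (2*k) := by
        have hle : (∫ t in Ioi (0:ℝ), ‖G (y, t)‖) ≤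
            ∫ t in Ioi (0:ℝ), y ^ (k - 3/2) * (t ^ (2*k - 1) * Real.exp (-(1 * t))) := by
          apply integral_mono_of_nonneg
          · exact Filter.Eventually.of_forall fun t => norm_nonneg _
          · exact (wBase k 1 hk one_pos).const_mul _
          · filter_upwards [ae_restrict_mem measurableSet_Ioi] with t ht
            have ht0 : 0 < t := ht
            simp only [hGdef]
            rw [norm_mul, norm_mul, Real.norm_eq_abs, Real.norm_eq_abs, Real.norm_eq_abs,
              abs_of_nonneg (Real.rpow_nonneg hy0.le _),
              abs_of_nonneg (by positivity : (0:ℝ) ≤ t ^ (2*k - 1) * Real.exp (-((1 + y) * t)))]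
            have b1 : |y - 1| ≤ 1 := abs_le.mpr ⟨by linarith [hy.2], by linarith [hy.2]⟩
            have b2 : Real.exp (-((1 + y) * t)) ≤ Real.exp (-(1 * t)) :=
              Real.exp_le_exp.mpr (by nlinarith)
            calc y ^ (k - 3/2) * |y - 1| * (t ^ (2*k - 1) * Real.exp (-((1 + y) * t)))
                ≤ y ^ (k - 3/2) * 1 * (t ^ (2*k - 1) * Real.exp (-(1 * t))) := by
                  gcongr
                _ = y ^ (k - 3/2) * (t ^ (2*k - 1) * Real.exp (-(1 * t))) := by ring
        calc (∫ t in Ioi (0:ℝ), ‖G (y, t)‖) ≤ _ := hle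
          _ = y ^ (k - 3/2) * ((1/(1:ℝ)) ^ (2*k) * Real.Gamma (2*k)) := key
          _ = y ^ (k - 3/2) * Real.Gamma (2*k) := by norm_num
      rw [Real.norm_eq_abs, Real.norm_eq_abs,
        abs_of_nonneg (integral_nonneg fun t => norm_nonneg _),
        abs_of_nonneg (by positivity : (0:ℝ) ≤ y ^ (k - 3/2) * Real.Gamma (2*k))]
      exact hb
  rw [show {p : ℝ × ℝ | 0 < p.1 ∧ p.1 < p.2} = wPhi '' ((Ioo (0:ℝ) 1) ×ˢ (Ioi (0:ℝ))) from
    wPhi_image.symm]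
  rw [integral_image_eq_integral_abs_det_fderiv_smul volume hs
    (fun x _ => (hasFDerivAt_wPhi x).hasFDerivWithinAt) wPhi_injOn]
  have heq : EqOn (fun x : ℝ × ℝ => |(wB x).det| •
      (((wPhi x).1 * (wPhi x).2) ^ (k - 3/2) * ((wPhi x).1 - (wPhi x).2) *
        Real.exp (-((wPhi x).1 + (wPhi x).2)))) G ((Ioo (0:ℝ) 1) ×ˢ (Ioi (0:ℝ))) := by
    rintro ⟨y, t⟩ ⟨⟨hy0, hy1⟩, ht⟩
    simp only [wB_det, wPhi, smul_eq_mul, hGdef]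
    exact wPoint k y t hy0 ht
  rw [setIntegral_congr_fun hs heq]
  rw [show (volume : Measure (ℝ × ℝ)) = (volume : Measure ℝ).prod volume from
    Measure.volume_eq_prod ℝ ℝ]
  rw [setIntegral_prod G (by rwa [IntegrableOn, ← Measure.prod_restrict])]
  have heq2 : EqOn (fun y : ℝ => ∫ t in Ioi (0:ℝ), G (y, t))
      (fun y : ℝ => (y ^ (k - 3/2) * ((y - 1) * (1 + y) ^ (-(2*k)))) * Real.Gamma (2*k))
      (Ioo (0:ℝ) 1) := by
    intro y hy
    have hy0 : 0 < y := hy.1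
    have h1y : (0:ℝ) < 1 + y := by linarith
    simp only
    rw [show (fun t : ℝ => G (y, t)) = fun t : ℝ =>
      y ^ (k - 3/2) * (y - 1) * (t ^ (2*k - 1) * Real.exp (-((1 + y) * t))) from rfl]
    rw [wInner k y hk hy0]
    rw [one_div, Real.inv_rpow h1y.le, ← Real.rpow_neg h1y.le]
    ring
  rw [setIntegral_congr_fun measurableSet_Ioo heq2, integral_mul_const]
  have hIoo : (∫ y in Ioo (0:ℝ) 1, y ^ (k - 3/2) * ((y - 1) * (1 + y) ^ (-(2*k)))) =
      ∫ y in (0:ℝ)..1, y ^ (k - 3/2) * ((y - 1) * (1 + y) ^ (-(2*k))) := by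
    rw [intervalIntegral.integral_of_le zero_le_one, integral_Ioc_eq_integral_Ioo]
  rw [hIoo, wJ k hk]
  -- final algebra
  have hdup := Real.Gamma_mul_Gamma_add_half (k - 1/2)
  rw [show k - 1/2 + 1/2 = k by ring, show 1 - 2*(k - 1/2) = 2 - 2*k by ring,
    show 2*(k - 1/2) = 2*k - 1 by ring] at hdup
  have hGrec : Real.Gamma (2*k) = (2*k - 1) * Real.Gamma (2*k - 1) := by
    nth_rewrite 1 [show 2*k = (2*k - 1) + 1 by ring]
    exact Real.Gamma_add_one (by intro h; nlinarith [hk] : (2:ℝ)*k - 1 ≠ 0)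
  have h2 : (2:ℝ) ^ (2 - 2*k) = 2 * 2 ^ (1 - 2*k) := by
    rw [show (2:ℝ) - 2*k = 1 + (1 - 2*k) by ring, Real.rpow_add two_pos, Real.rpow_one]
  have hsp : Real.sqrt Real.pi ≠ 0 := (Real.sqrt_pos.mpr Real.pi_pos).ne'
  rw [hGrec]
  rw [h2] at hdup
  have hinv : (k - 1/2) * (k - 1/2)⁻¹ = 1 := mul_inv_cancel₀ hc.ne'
  have hs2 : Real.sqrt Real.pi * (Real.sqrt Real.pi)⁻¹ = 1 := mul_inv_cancel₀ hsp
  linear_combination (-(2 * 2 ^ (1 - 2*k) * Real.Gamma (2*k - 1))) * hinv +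
    (Real.sqrt Real.pi)⁻¹ * hdup + (2 * 2 ^ (1 - 2*k) * Real.Gamma (2*k - 1)) * hs2
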